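/- Let a₁, …, aₙ ∈ H_d with hyperbolic distance matrix D = [d^κ_H(a_i, a_j)], and let A = [cosh(√κ d_{ij})]. Then A = [a_i ∘ a_j], A has exactly one positive eigenvalue and at most d negative eigenvalues, and any points x₁, …, xₙ ∈ ℝ^{1,d} satisfying x_i ∘ x_j = a_i ∘ a_j for all i,j form a configuration isometric to (a_i): d^κ_H(x_i, x_j) = d^κ_H(a_i, a_j) for all i,j. -/

import Mathlib

open Matrix

def lorentz {d : ℕ} (x y : Fin (d + 1) → ℝ) : ℝ :=
  x 0 * y 0 - ∑ k : Fin d, x k.succ * y k.succ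

noncomputable def arcosh (t : ℝ) : ℝ := Real.log (t + Real.sqrt (t ^ 2 - 1))

noncomputable def dH {d : ℕ} (κ : ℝ) (x y : Fin (d + 1) → ℝ) : ℝ :=
  (1 / Real.sqrt κ) * arcosh (lorentz x y)

lemma cosh_arcosh {t : ℝ} (ht : 1 ≤ t) : Real.cosh (arcosh t) = t := by
  have h1 : (0:ℝ) ≤ t ^ 2 - 1 := by nlinarith
  have hs := Real.sq_sqrt h1
  have hsn := Real.sqrt_nonneg (t ^ 2 - 1)
  have hpos : 0 < t + Real.sqrt (t ^ 2 - 1) := by nlinarith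
  rw [Real.cosh_eq, arcosh, Real.exp_neg, Real.exp_log hpos]
  have hne : t + Real.sqrt (t ^ 2 - 1) ≠ 0 := ne_of_gt hpos
  field_simp
  nlinarith [hs]

lemma lorentz_ge_one {d : ℕ} {x y : Fin (d + 1) → ℝ}
    (hx : lorentz x x = 1) (hx0 : 0 < x 0)
    (hy : lorentz y y = 1) (hy0 : 0 < y 0) : 1 ≤ lorentz x y := by
  unfold lorentz at *
  set X := ∑ k : Fin d, x k.succ * x k.succ with hXdef
  set Y := ∑ k : Fin d, y k.succ * y k.succ with hYdef
  set P := ∑ k : Fin d, x k.succ * y k.succ with hPdef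
  have hX : 0 ≤ X := Finset.sum_nonneg fun k _ => mul_self_nonneg _
  have hY : 0 ≤ Y := Finset.sum_nonneg fun k _ => mul_self_nonneg _
  have hP : P ^ 2 ≤ X * Y := by
    have := Finset.sum_mul_sq_le_sq_mul_sq Finset.univ
      (fun k : Fin d => x k.succ) (fun k : Fin d => y k.succ)
    simpa [hXdef, hYdef, hPdef, sq] using this
  have h2P : 2 * P ≤ X + Y := by nlinarith [hP, sq_nonneg (X - Y)]
  have hkey : (1 + P) ^ 2 ≤ (x 0 * y 0) ^ 2 := by nlinarith [hP, h2P]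
  nlinarith [hkey, mul_pos hx0 hy0]

lemma sq_sum_swap {n d : ℕ} (x : Fin n → Fin d → ℝ) :
    ∑ i, ∑ j, ∑ k, x i k * x j k = ∑ k : Fin d, (∑ i, x i k) ^ 2 := by
  have h : ∀ k : Fin d, (∑ i, x i k) ^ 2 = ∑ i, ∑ j, x i k * x j k := fun k => by
    rw [sq, Finset.sum_mul_sum]
  calc ∑ i, ∑ j, ∑ k, x i k * x j k
      = ∑ i, ∑ k, ∑ j, x i k * x j k := Finset.sum_congr rfl fun i _ => Finset.sum_comm
    _ = ∑ k, ∑ i, ∑ j, x i k * x j k := Finset.sum_comm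
    _ = ∑ k : Fin d, (∑ i, x i k) ^ 2 := by simp [h]

lemma sum_dotProduct' {ι n : Type*} [Fintype n] (s : Finset ι) (f : ι → n → ℝ) (w : n → ℝ) :
    (∑ i ∈ s, f i) ⬝ᵥ w = ∑ i ∈ s, f i ⬝ᵥ w := by
  simp only [dotProduct, Finset.sum_apply, Finset.sum_mul]
  exact Finset.sum_comm

lemma dotProduct_sum' {ι n : Type*} [Fintype n] (s : Finset ι) (w : n → ℝ) (f : ι → n → ℝ) :
    w ⬝ᵥ (∑ i ∈ s, f i) = ∑ i ∈ s, w ⬝ᵥ f i := by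
  simp only [dotProduct, Finset.sum_apply, Finset.mul_sum]
  exact Finset.sum_comm

lemma key_card_le {n m : ℕ} {A : Matrix (Fin n) (Fin n) ℝ} (hA : A.IsHermitian) (s : ℝ)
    (f : (Fin n → ℝ) →ₗ[ℝ] (Fin m → ℝ))
    (h : ∀ x, f x = 0 → 0 ≤ s * (x ⬝ᵥ A.mulVec x)) :
    (Finset.univ.filter fun i => s * hA.eigenvalues i < 0).card ≤ m := by
  classical
  set S := Finset.univ.filter fun i => s * hA.eigenvalues i < 0 with hS
  set W : Fin n → (Fin n → ℝ) := fun i => ⇑(hA.eigenvectorBasis i) with hW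
  have horth : ∀ i j, W i ⬝ᵥ W j = if i = j then 1 else 0 := by
    intro i j
    have := orthonormal_iff_ite.mp hA.eigenvectorBasis.orthonormal i j
    simpa [W, PiLp.inner_apply, dotProduct, RCLike.inner_apply, conj_trivial, mul_comm] using this
  have hmul : ∀ i, A *ᵥ W i = hA.eigenvalues i • W i := fun i => hA.mulVec_eigenvectorBasis i
  set T : (↥S → ℝ) →ₗ[ℝ] (Fin n → ℝ) :=
    { toFun := fun c => ∑ i : ↥S, c i • W i.1
      map_add' := by intro c₁ c₂; simp [add_smul, Finset.sum_add_distrib]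
      map_smul' := by intro r c; simp [smul_smul, Finset.smul_sum] } with hT
  by_contra hc
  push_neg at hc
  have hninj : ¬ Function.Injective (f ∘ₗ T) := by
    intro hinj
    have h1 := LinearMap.finrank_le_finrank_of_injective hinj
    simp only [Module.finrank_pi, Fintype.card_coe, Fintype.card_fin] at h1
    omega
  obtain ⟨c₁, c₂, heq, hne⟩ := Function.not_injective_iff.mp hninj
  set c : ↥S → ℝ := c₁ - c₂ with hcdef
  have hc0 : c ≠ 0 := sub_ne_zero.mpr hne
  have hfc : f (T c) = 0 := by
    have : (f ∘ₗ T) c = 0 := by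
      rw [hcdef, map_sub]
      rw [show (f ∘ₗ T) c₁ = (f ∘ₗ T) c₂ from heq]
      exact sub_self _
    simpa using this
  have hQ : 0 ≤ s * (T c ⬝ᵥ A.mulVec (T c)) := h _ hfc
  have hdotW : ∀ j : ↥S, T c ⬝ᵥ W j.1 = c j := by
    intro j
    show (∑ i : ↥S, c i • W i.1) ⬝ᵥ W j.1 = c j
    rw [sum_dotProduct']
    simp only [smul_dotProduct, horth, smul_eq_mul]
    rw [Finset.sum_eq_single j]
    · simp
    · intro b _ hb
      have hbj : (b : Fin n) ≠ (j : Fin n) := fun hbj => hb (Subtype.ext hbj)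
      simp [hbj]
    · simp
  have hAx : A *ᵥ T c = ∑ i : ↥S, (hA.eigenvalues i.1 * c i) • W i.1 := by
    show A.mulVecLin (∑ i : ↥S, c i • W i.1) = _
    rw [map_sum]
    simp [mulVecLin_apply, mulVec_smul, hmul, smul_smul, mul_comm]
  have hquad : T c ⬝ᵥ A.mulVec (T c) = ∑ i : ↥S, hA.eigenvalues i.1 * c i ^ 2 := by
    rw [show A.mulVec (T c) = _ from hAx, dotProduct_sum']
    simp only [dotProduct_smul, smul_eq_mul, hdotW]
    apply Finset.sum_congr rfl
    intro i _
    ring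
  obtain ⟨i₀, hi₀⟩ := Function.ne_iff.mp hc0
  have hlt : s * (T c ⬝ᵥ A.mulVec (T c)) < 0 := by
    rw [hquad, Finset.mul_sum]
    have hz : ∑ _i : ↥S, (0:ℝ) = 0 := by simp
    rw [← hz]
    apply Finset.sum_lt_sum
    · intro i _
      have hiS : s * hA.eigenvalues i.1 < 0 := (Finset.mem_filter.mp i.2).2
      have : s * (hA.eigenvalues i.1 * c i ^ 2) = (s * hA.eigenvalues i.1) * c i ^ 2 := by ring
      rw [this]
      exact mul_nonpos_of_nonpos_of_nonneg hiS.le (sq_nonneg _)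
    · refine ⟨i₀, Finset.mem_univ _, ?_⟩
      have hiS : s * hA.eigenvalues i₀.1 < 0 := (Finset.mem_filter.mp i₀.2).2
      have hci : (0:ℝ) < c i₀ ^ 2 :=
        lt_of_le_of_ne (sq_nonneg _) (Ne.symm (pow_ne_zero 2 hi₀))
      nlinarith
  linarith

lemma trace_eq_sum_eigenvalues {n : ℕ} {A : Matrix (Fin n) (Fin n) ℝ} (hA : A.IsHermitian) :
    ∑ i, hA.eigenvalues i = A.trace := by
  rw [hA.trace_eq_sum_eigenvalues]
  simp

theorem hydra_exact_recovery_structure {n d : ℕ} (hn : 0 < n) (hd : d ≤ n - 1)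
    (κ : ℝ) (hκ : 0 < κ)
    (a : Fin n → (Fin (d + 1) → ℝ))
    (ha : ∀ i, lorentz (a i) (a i) = 1 ∧ 0 < a i 0)
    (D : Matrix (Fin n) (Fin n) ℝ) (hD : ∀ i j, D i j = dH κ (a i) (a j))
    (A : Matrix (Fin n) (Fin n) ℝ)
    (hA : ∀ i j, A i j = Real.cosh (Real.sqrt κ * D i j)) :
    (∀ i j, A i j = lorentz (a i) (a j)) ∧
    (∃ hAh : A.IsHermitian,
      (Finset.univ.filter fun i => 0 < hAh.eigenvalues i).card = 1 ∧
      (Finset.univ.filter fun i => hAh.eigenvalues i < 0).card ≤ d) ∧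
    (∀ x : Fin n → (Fin (d + 1) → ℝ),
      (∀ i j, lorentz (x i) (x j) = lorentz (a i) (a j)) →
      ∀ i j, dH κ (x i) (x j) = dH κ (a i) (a j)) := by
  have hsκ : Real.sqrt κ ≠ 0 := (Real.sqrt_pos.mpr hκ).ne'
  have hge : ∀ i j, 1 ≤ lorentz (a i) (a j) := fun i j =>
    lorentz_ge_one (ha i).1 (ha i).2 (ha j).1 (ha j).2
  have h1 : ∀ i j, A i j = lorentz (a i) (a j) := by
    intro i j
    rw [hA i j, hD i j, dH]
    rw [show Real.sqrt κ * (1 / Real.sqrt κ * arcosh (lorentz (a i) (a j)))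
        = arcosh (lorentz (a i) (a j)) by field_simp]
    exact cosh_arcosh (hge i j)
  -- Hermitian
  have hAh : A.IsHermitian := by
    ext i j
    simp only [conjTranspose_apply, star_trivial]
    rw [h1 i j, h1 j i, lorentz, lorentz]
    ring_nf
    rw [Finset.sum_congr rfl fun k _ => mul_comm (a j k.succ) (a i k.succ)]
  -- quadratic form identity
  have hquad : ∀ x : Fin n → ℝ,
      x ⬝ᵥ A.mulVec x = (∑ i, x i * a i 0) ^ 2
        - ∑ k : Fin d, (∑ i, x i * a i k.succ) ^ 2 := by
    intro x
    have e1 : x ⬝ᵥ A.mulVec x = ∑ i, ∑ j, x i * (A i j * x j) := by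
      simp [dotProduct, mulVec, Finset.mul_sum]
    rw [e1]
    have e2 : ∀ i j, x i * (A i j * x j)
        = (x i * a i 0) * (x j * a j 0)
          - ∑ k : Fin d, (x i * a i k.succ) * (x j * a j k.succ) := by
      intro i j
      rw [h1 i j, lorentz]
      rw [sub_mul, mul_sub, Finset.sum_mul, Finset.mul_sum]
      congr 1
      · ring
      · exact Finset.sum_congr rfl fun k _ => by ring
    simp only [e2]
    rw [Finset.sum_congr rfl fun i _ => Finset.sum_sub_distrib _ _, Finset.sum_sub_distrib]
    congr 1
    · rw [sq, Finset.sum_mul_sum]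
    · rw [← sq_sum_swap (fun i k => x i * a i k.succ)]
  refine ⟨h1, ⟨hAh, ?_, ?_⟩, ?_⟩
  · -- exactly one positive eigenvalue
    have hle : (Finset.univ.filter fun i => 0 < hAh.eigenvalues i).card ≤ 1 := by
      have := key_card_le hAh (-1)
        ({ toFun := fun x _ => ∑ i, x i * a i 0
           map_add' := by intro x y; funext k; simp [add_mul, Finset.sum_add_distrib]
           map_smul' := by intro r x; funext k; simp [mul_assoc, Finset.mul_sum] } :
          (Fin n → ℝ) →ₗ[ℝ] (Fin 1 → ℝ))
        (by
          intro x hx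
          have h0 : (∑ i, x i * a i 0) = 0 := congrFun hx 0
          rw [hquad x, h0]
          have : (0:ℝ) ≤ ∑ k : Fin d, (∑ i, x i * a i k.succ) ^ 2 :=
            Finset.sum_nonneg fun k _ => sq_nonneg _
          nlinarith)
      refine le_trans (le_of_eq ?_) this
      congr 1
      apply Finset.filter_congr
      intro i _
      constructor
      · intro hi; simpa using hi
      · intro hi; nlinarith [hi]
    have hne0 : (Finset.univ.filter fun i => 0 < hAh.eigenvalues i).card ≠ 0 := by
      intro h0
      have hall : ∀ i, hAh.eigenvalues i ≤ 0 := by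
        intro i
        by_contra hpos
        push_neg at hpos
        have : i ∈ Finset.univ.filter fun i => 0 < hAh.eigenvalues i :=
          Finset.mem_filter.mpr ⟨Finset.mem_univ _, hpos⟩
        rw [Finset.card_eq_zero.mp h0] at this
        exact absurd this (Finset.notMem_empty _)
      have hsum : ∑ i, hAh.eigenvalues i ≤ 0 := Finset.sum_nonpos fun i _ => hall i
      rw [trace_eq_sum_eigenvalues hAh] at hsum
      have htr : A.trace = (n : ℝ) := by
        have hd1 : ∀ i, A i i = 1 := fun i => by rw [h1 i i, (ha i).1]
        simp [Matrix.trace, Matrix.diag, hd1]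
      rw [htr] at hsum
      have : (0:ℝ) < n := by exact_mod_cast hn
      linarith
    omega
  · -- at most d negative eigenvalues
    have := key_card_le hAh 1
      ({ toFun := fun x k => ∑ i, x i * a i k.succ
         map_add' := by intro x y; funext k; simp [add_mul, Finset.sum_add_distrib]
         map_smul' := by intro r x; funext k; simp [mul_assoc, Finset.mul_sum] } :
        (Fin n → ℝ) →ₗ[ℝ] (Fin d → ℝ))
      (by
        intro x hx
        rw [hquad x]
        have hk : ∀ k : Fin d, (∑ i, x i * a i k.succ) = 0 := fun k => congrFun hx k
        simp only [hk]
        simp [sq_nonneg])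
    refine le_trans (le_of_eq ?_) this
    congr 1
    apply Finset.filter_congr
    intro i _
    simp
  · intro x hx i j
    rw [dH, dH, hx i j]
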